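/- Let A = a·I_𝒳 + (b·I_ℬ + c·𝟙_ℬ) ⊗ 𝟙_𝒞 be a matrix indexed by 𝒳 = ℬ × 𝒞 with |ℬ| = s, |𝒞| = t, where a = (e^α - e^{(1-r)α})/D, b = (e^{(1-r)α} - 1)/D, c = 1/D, and D = e^α + (t-1)e^{(1-r)α} + (s-1)t, for α > 0 and 0 < r < 1. Then A is invertible with inverse A^{-1} = a'·I_𝒳 + (b'·I_ℬ + c'·𝟙_ℬ) ⊗ 𝟙_𝒞, where a' = D/(e^α - e^{(1-r)α}), b' = -(e^{(1-r)α}-1)·D/((e^α - e^{(1-r)α})(e^α + (t-1)e^{(1-r)α} - t)), and c' = -1/(e^α + (t-1)e^{(1-r)α} - t). -/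

import Mathlib

open Matrix Kronecker

lemma J_mul_J (C : Type*) [Fintype C] :
    (Matrix.of fun _ _ => (1:ℝ) : Matrix C C ℝ) * (Matrix.of fun _ _ => (1:ℝ)) =
      (Fintype.card C : ℝ) • (Matrix.of fun _ _ => (1:ℝ)) := by
  ext i j; simp [Matrix.mul_apply]

lemma prod_form {B C : Type*} [Fintype B] [Fintype C] [DecidableEq B] [DecidableEq C]
    (x y : ℝ) (X Y : Matrix B B ℝ) :
    (x • (1 : Matrix (B × C) (B × C) ℝ) +
        X ⊗ₖ (Matrix.of fun _ _ => (1:ℝ) : Matrix C C ℝ)) *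
      (y • (1 : Matrix (B × C) (B × C) ℝ) +
        Y ⊗ₖ (Matrix.of fun _ _ => (1:ℝ) : Matrix C C ℝ)) =
    (x * y) • (1 : Matrix (B × C) (B × C) ℝ) +
      (x • Y + y • X + (Fintype.card C : ℝ) • (X * Y)) ⊗ₖ
        (Matrix.of fun _ _ => (1:ℝ) : Matrix C C ℝ) := by
  rw [add_mul, mul_add, mul_add, smul_mul_assoc, smul_mul_assoc, mul_smul_comm,
    ← Matrix.mul_kronecker_mul, J_mul_J, Matrix.kronecker_smul,
    Matrix.add_kronecker, Matrix.add_kronecker, Matrix.smul_kronecker,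
    Matrix.smul_kronecker, Matrix.smul_kronecker, one_mul, Matrix.mul_smul, mul_one, smul_smul]
  simp only [one_mul]; abel

lemma coef_zero {B : Type*} [Fintype B] [DecidableEq B]
    (s t a b c a' b' c' : ℝ) (hB : (Fintype.card B : ℝ) = s)
    (hab : a * b' + a' * b + t * (b * b') = 0)
    (hac : a * c' + a' * c + t * (b * c' + c * b' + s * (c * c')) = 0) :
    a • (b' • (1 : Matrix B B ℝ) + c' • (Matrix.of fun _ _ => (1:ℝ))) +
      a' • (b • (1 : Matrix B B ℝ) + c • (Matrix.of fun _ _ => (1:ℝ))) +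
      t • ((b • (1 : Matrix B B ℝ) + c • (Matrix.of fun _ _ => (1:ℝ))) *
        (b' • (1 : Matrix B B ℝ) + c' • (Matrix.of fun _ _ => (1:ℝ)))) = 0 := by
  ext i j
  simp only [Matrix.add_apply, Matrix.smul_apply, Matrix.mul_apply, Matrix.one_apply,
    Matrix.of_apply, smul_eq_mul, Matrix.zero_apply, mul_one]
  rw [Finset.sum_congr rfl (fun k _ => show
    (b * (if i = k then (1:ℝ) else 0) + c) * (b' * (if k = j then (1:ℝ) else 0) + c') =
    b * b' * ((if i = k then (1:ℝ) else 0) * (if k = j then (1:ℝ) else 0)) +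
      b * c' * (if i = k then (1:ℝ) else 0) + c * b' * (if k = j then (1:ℝ) else 0) + c * c'
    from by ring)]
  simp only [Finset.sum_add_distrib, ← Finset.mul_sum, Finset.sum_ite_eq, Finset.sum_ite_eq',
    Finset.mem_univ, if_true, Finset.sum_const, Finset.card_univ, nsmul_eq_mul, mul_ite,
    mul_one, mul_zero, hB]
  rcases eq_or_ne i j with h | h
  · simp only [h, if_true]; linear_combination hab + hac
  · simp only [h, if_false]; linear_combination hac

section Scalars
variable (E F S T : ℝ)

lemma scalar_haa (hEF : E - F ≠ 0) (hD : E + (T-1)*F + (S-1)*T ≠ 0) :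
    (E - F) / (E + (T-1)*F + (S-1)*T) * ((E + (T-1)*F + (S-1)*T) / (E - F)) = 1 := by
  have hD' : E + F * (T - 1) + T * (S - 1) ≠ 0 := by convert hD using 1; ring
  field_simp

lemma scalar_hab (hEF : E - F ≠ 0) (hM : E + (T-1)*F - T ≠ 0)
    (hD : E + (T-1)*F + (S-1)*T ≠ 0) :
    (E - F) / (E + (T-1)*F + (S-1)*T) *
        (-((F - 1) * (E + (T-1)*F + (S-1)*T)) / ((E - F) * (E + (T-1)*F - T))) +
      (E + (T-1)*F + (S-1)*T) / (E - F) * ((F - 1) / (E + (T-1)*F + (S-1)*T)) +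
      T * ((F - 1) / (E + (T-1)*F + (S-1)*T) *
        (-((F - 1) * (E + (T-1)*F + (S-1)*T)) / ((E - F) * (E + (T-1)*F - T)))) = 0 := by
  have hD' : E + F * (T - 1) + T * (S - 1) ≠ 0 := by convert hD using 1; ring
  have hM' : E + F * (T - 1) - T ≠ 0 := by convert hM using 1; ring
  field_simp
  ring

lemma scalar_hac (hEF : E - F ≠ 0) (hM : E + (T-1)*F - T ≠ 0)
    (hD : E + (T-1)*F + (S-1)*T ≠ 0) :
    (E - F) / (E + (T-1)*F + (S-1)*T) * (-1 / (E + (T-1)*F - T)) +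
      (E + (T-1)*F + (S-1)*T) / (E - F) * (1 / (E + (T-1)*F + (S-1)*T)) +
      T * ((F - 1) / (E + (T-1)*F + (S-1)*T) * (-1 / (E + (T-1)*F - T)) +
        1 / (E + (T-1)*F + (S-1)*T) *
          (-((F - 1) * (E + (T-1)*F + (S-1)*T)) / ((E - F) * (E + (T-1)*F - T))) +
        S * (1 / (E + (T-1)*F + (S-1)*T) * (-1 / (E + (T-1)*F - T)))) = 0 := by
  have hD' : E + F * (T - 1) + T * (S - 1) ≠ 0 := by convert hD using 1; ring
  have hM' : E + F * (T - 1) - T ≠ 0 := by convert hM using 1; ring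
  field_simp
  ring

end Scalars

/-- explicit inverse of the generalized randomized response
transition matrix `A = a·I + (b·I_ℬ + c·𝟙_ℬ) ⊗ 𝟙_𝒞`. -/
theorem gkrr_matrix_inverse {B C : Type*} [Fintype B] [Fintype C]
    [DecidableEq B] [DecidableEq C]
    (s t : ℕ) (hB : Fintype.card B = s) (hC : Fintype.card C = t)
    (hs : 1 ≤ s) (ht : 1 ≤ t)
    (α r : ℝ) (hα : 0 < α) (hr0 : 0 < r) (hr1 : r < 1) :
    let D : ℝ := Real.exp α + ((t : ℝ) - 1) * Real.exp ((1 - r) * α)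
        + ((s : ℝ) - 1) * t
    let a : ℝ := (Real.exp α - Real.exp ((1 - r) * α)) / D
    let b : ℝ := (Real.exp ((1 - r) * α) - 1) / D
    let c : ℝ := 1 / D
    let a' : ℝ := D / (Real.exp α - Real.exp ((1 - r) * α))
    let b' : ℝ := -((Real.exp ((1 - r) * α) - 1) * D) /
        ((Real.exp α - Real.exp ((1 - r) * α))
          * (Real.exp α + ((t : ℝ) - 1) * Real.exp ((1 - r) * α) - t))
    let c' : ℝ := -1 / (Real.exp α + ((t : ℝ) - 1) * Real.exp ((1 - r) * α) - t)
    let A : Matrix (B × C) (B × C) ℝ :=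
      a • (1 : Matrix (B × C) (B × C) ℝ) +
        ((b • (1 : Matrix B B ℝ) + c • (Matrix.of fun _ _ => (1 : ℝ)))
          ⊗ₖ (Matrix.of fun _ _ => (1 : ℝ) : Matrix C C ℝ))
    let A' : Matrix (B × C) (B × C) ℝ :=
      a' • (1 : Matrix (B × C) (B × C) ℝ) +
        ((b' • (1 : Matrix B B ℝ) + c' • (Matrix.of fun _ _ => (1 : ℝ)))
          ⊗ₖ (Matrix.of fun _ _ => (1 : ℝ) : Matrix C C ℝ))
    A * A' = 1 ∧ A' * A = 1 := by
  intro D a b c a' b' c' A A'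
  have ht1 : (1:ℝ) ≤ (t:ℝ) := by exact_mod_cast ht
  have hs1 : (1:ℝ) ≤ (s:ℝ) := by exact_mod_cast hs
  have hrα : 0 < (1 - r) * α := by nlinarith
  have hF1 : (1:ℝ) < Real.exp ((1 - r) * α) := by
    have := Real.add_one_le_exp ((1 - r) * α); nlinarith
  have hFE : Real.exp ((1 - r) * α) < Real.exp α := Real.exp_lt_exp.mpr (by nlinarith)
  have hEF : Real.exp α - Real.exp ((1 - r) * α) ≠ 0 := by nlinarith
  have hM : Real.exp α + ((t:ℝ) - 1) * Real.exp ((1 - r) * α) - (t:ℝ) ≠ 0 := by nlinarith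
  have hD : Real.exp α + ((t:ℝ) - 1) * Real.exp ((1 - r) * α) + ((s:ℝ) - 1) * (t:ℝ) ≠ 0 := by
    nlinarith
  have haa : a * a' = 1 :=
    scalar_haa (Real.exp α) (Real.exp ((1 - r) * α)) (s:ℝ) (t:ℝ) hEF hD
  have hab : a * b' + a' * b + (t:ℝ) * (b * b') = 0 :=
    scalar_hab (Real.exp α) (Real.exp ((1 - r) * α)) (s:ℝ) (t:ℝ) hEF hM hD
  have hac : a * c' + a' * c + (t:ℝ) * (b * c' + c * b' + (s:ℝ) * (c * c')) = 0 :=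
    scalar_hac (Real.exp α) (Real.exp ((1 - r) * α)) (s:ℝ) (t:ℝ) hEF hM hD
  have hab' : a' * b + a * b' + (t:ℝ) * (b' * b) = 0 := by linear_combination hab
  have hac' : a' * c + a * c' + (t:ℝ) * (b' * c + c' * b + (s:ℝ) * (c' * c)) = 0 := by
    linear_combination hac
  have hBs : (Fintype.card B : ℝ) = (s:ℝ) := by exact_mod_cast hB
  have hCt : (Fintype.card C : ℝ) = (t:ℝ) := by exact_mod_cast hC
  clear_value D
  clear_value a b c a' b' c'
  constructor
  · show (a • 1 + _) * (a' • 1 + _) = 1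
    rw [prod_form, hCt, coef_zero (s:ℝ) (t:ℝ) a b c a' b' c' hBs hab hac,
      Matrix.zero_kronecker, add_zero, haa, one_smul]
  · show (a' • 1 + _) * (a • 1 + _) = 1
    rw [prod_form, hCt, coef_zero (s:ℝ) (t:ℝ) a' b' c' a b c hBs hab' hac',
      Matrix.zero_kronecker, add_zero, mul_comm a' a, haa, one_smul]
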